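/- Let R ≥ 1 and let T be a tree with local density Δ(T) that contains no R-tripod as a subgraph. Then T admits an embedding into the line with distortion O(Δ(T)·R): there is a map f : V(T) → ℝ with d_T(p,q) ≤ |f(p)−f(q)| ≤ C·Δ(T)·R·d_T(p,q) for all p,q, for some absolute constant C. -/

import Mathlib

open SimpleGraph List
set_option linter.unusedSectionVars false
set_option linter.unusedVariables false

/-- `G` contains an `R`-tripod as a subgraph. -/
def ContainsTripod {W : Type*} (G : SimpleGraph W) (R : ℕ) : Prop :=
  ∃ (v v₁ v₂ v₃ : W) (p₁ : G.Walk v v₁) (p₂ : G.Walk v v₂) (p₃ : G.Walk v v₃),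
    p₁.IsPath ∧ p₂.IsPath ∧ p₃.IsPath ∧
    (∀ u ∈ p₂.support, R ≤ G.dist v₁ u) ∧
    (∀ u ∈ p₃.support, R ≤ G.dist v₁ u) ∧
    (∀ u ∈ p₁.support, R ≤ G.dist v₂ u) ∧
    (∀ u ∈ p₃.support, R ≤ G.dist v₂ u) ∧
    (∀ u ∈ p₁.support, R ≤ G.dist v₃ u) ∧
    (∀ u ∈ p₂.support, R ≤ G.dist v₃ u)


namespace TreeEmbed

variable {V : Type*} [DecidableEq V] {T : SimpleGraph V}

/-- the unique path between two vertices of a tree -/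
noncomputable def pth (hT : T.IsTree) (u v : V) : T.Walk u v :=
  (hT.existsUnique_path u v).exists.choose

lemma pth_isPath (hT : T.IsTree) (u v : V) : (pth hT u v).IsPath :=
  (hT.existsUnique_path u v).exists.choose_spec

lemma eq_pth (hT : T.IsTree) {u v : V} {p : T.Walk u v} (hp : p.IsPath) : p = pth hT u v :=
  (hT.existsUnique_path u v).unique hp (pth_isPath hT u v)

lemma length_eq_dist (hT : T.IsTree) {u v : V} {p : T.Walk u v} (hp : p.IsPath) :
    p.length = T.dist u v := by
  obtain ⟨q, hq⟩ := hT.isConnected.exists_walk_length_eq_dist u v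
  have h1 : q.bypass.length = T.dist u v :=
    le_antisymm (hq ▸ q.length_bypass_le) (T.dist_le _)
  have := (eq_pth hT hp).trans (eq_pth hT q.bypass_isPath).symm
  rw [this, h1]

lemma dist_split (hT : T.IsTree) {u v w : V} {p : T.Walk u v} (hp : p.IsPath)
    (hw : w ∈ p.support) : T.dist u w + T.dist w v = T.dist u v := by
  rw [← length_eq_dist hT hp, ← length_eq_dist hT (hp.takeUntil hw),
    ← length_eq_dist hT (hp.dropUntil hw)]
  have := congrArg Walk.length (p.take_spec hw)
  rw [Walk.length_append] at this
  exact this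

lemma getVert_mem_support {u v : V} (p : T.Walk u v) (k : ℕ) : p.getVert k ∈ p.support := by
  induction p generalizing k with
  | nil => simp [Walk.getVert]
  | cons h p ih =>
    cases k with
    | zero => simp [Walk.getVert]
    | succ k => simpa [Walk.getVert] using Or.inr (ih k)

lemma dist_getVert_le (hT : T.IsTree) {u v : V} (p : T.Walk u v) (k : ℕ) :
    T.dist u (p.getVert k) ≤ k := by
  induction p generalizing k with
  | nil => simp [Walk.getVert, SimpleGraph.dist_self]
  | cons h p ih =>
    rename_i x y z
    cases k with
    | zero => simp [Walk.getVert]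
    | succ k =>
      have h2 := ih k
      have h3 : T.dist x ((Walk.cons h p).getVert (k+1)) ≤ T.dist x y + T.dist y (p.getVert k) := by
        rw [Walk.getVert_cons_succ]
        exact hT.isConnected.dist_triangle
      have h4 : T.dist x y = 1 := SimpleGraph.dist_eq_one_iff_adj.mpr h
      omega

/-- every support vertex of a path equals `getVert` of its distance from the start -/
lemma getVert_dist_mem (hT : T.IsTree) {u v z : V} {p : T.Walk u v} (hp : p.IsPath)
    (hz : z ∈ p.support) : p.getVert (T.dist u z) = z := by
  have h1 : (p.takeUntil z hz).length = T.dist u z := length_eq_dist hT (hp.takeUntil hz)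
  have h2 := p.take_spec hz
  have h3 := Walk.getVert_append (p.takeUntil z hz) (p.dropUntil z hz) (T.dist u z)
  rw [h2] at h3
  rw [h3, h1]
  simp [Walk.getVert_zero]

/-- if `z1, z2` lie on a path from `u` and `z1` is closer to `u`, then `z1` lies on the
initial segment up to `z2`. -/
lemma mem_takeUntil_of_dist_le (hT : T.IsTree) {u v z1 z2 : V} {p : T.Walk u v}
    (hp : p.IsPath) (h1 : z1 ∈ p.support) (h2 : z2 ∈ p.support)
    (hle : T.dist u z1 ≤ T.dist u z2) : z1 ∈ (p.takeUntil z2 h2).support := by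
  have hsp := p.take_spec h2
  have : z1 ∈ ((p.takeUntil z2 h2).append (p.dropUntil z2 h2)).support := by rw [hsp]; exact h1
  rw [Walk.mem_support_append_iff] at this
  rcases this with h | h
  · exact h
  · -- z1 on the second segment: dist u z1 = dist u z2 + dist z2 z1, so z1 = z2
    have e1 : T.dist u z2 + T.dist z2 v = T.dist u v := dist_split hT hp h2
    have e2 : T.dist z2 z1 + T.dist z1 v = T.dist z2 v := dist_split hT (hp.dropUntil h2) h
    have e3 : T.dist u z1 + T.dist z1 v = T.dist u v := dist_split hT hp h1
    have : T.dist z2 z1 = 0 := by omega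
    have : z2 = z1 := by
      rcases SimpleGraph.dist_eq_zero_iff_eq_or_not_reachable.mp this with h' | h'
      · exact h'
      · exact absurd (hT.isConnected z2 z1) h'
    rw [← this]; exact Walk.end_mem_support _

/-- extend a path by one edge avoiding its support -/
lemma cons_path_end (hT : T.IsTree) {r x w : V} {p : T.Walk r x} (hp : p.IsPath)
    (h : T.Adj x w) (hw : w ∉ p.support) :
    ∃ q : T.Walk r w, q.IsPath ∧ q.length = p.length + 1 := by
  refine ⟨(Walk.cons h.symm p.reverse).reverse, ?_, by simp⟩
  apply Walk.IsPath.reverse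
  rw [Walk.cons_isPath_iff]
  exact ⟨hp.reverse, by simpa using hw⟩

/-- appending two paths whose supports meet only at the junction gives a path -/
lemma append_isPath (hT : T.IsTree) {u v w : V} {p : T.Walk u v} {q : T.Walk v w}
    (hp : p.IsPath) (hq : q.IsPath)
    (hdisj : ∀ z, z ∈ p.support → z ∈ q.support → z = v) : (p.append q).IsPath := by
  rw [Walk.isPath_def, Walk.support_append, List.nodup_append]
  refine ⟨hp.support_nodup, ?_, ?_⟩
  · have := hq.support_nodup
    rw [q.support_eq_cons] at this
    exact this.of_cons
  · intro z hz1 z' hz2 hzz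
    subst hzz
    have hz2' : z ∈ q.support := by rw [q.support_eq_cons]; exact List.mem_cons_of_mem _ hz2
    have := hdisj z hz1 hz2'
    subst this
    have := hq.support_nodup
    rw [q.support_eq_cons] at this
    exact (List.nodup_cons.mp this).1 hz2


lemma dist_pos_of_ne (hT : T.IsTree) {u v : V} (h : u ≠ v) : 1 ≤ T.dist u v :=
  hT.isConnected.pos_dist_of_ne h

lemma dist_eq_zero (hT : T.IsTree) {u v : V} (h : T.dist u v = 0) : u = v := by
  rcases SimpleGraph.dist_eq_zero_iff_eq_or_not_reachable.mp h with h' | h'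
  · exact h'
  · exact absurd (hT.isConnected u v) h'

/-- the parent of `x` in the tree rooted at `r` -/
noncomputable def par (hT : T.IsTree) (r x : V) : V :=
  (pth hT r x).getVert ((pth hT r x).length - 1)

lemma par_spec (hT : T.IsTree) {r x : V} (hx : x ≠ r) :
    T.Adj (par hT r x) x ∧ T.dist r (par hT r x) + 1 = T.dist r x := by
  have hlen : (pth hT r x).length = T.dist r x := length_eq_dist hT (pth_isPath hT r x)
  have hpos : 1 ≤ T.dist r x := dist_pos_of_ne hT (Ne.symm hx)
  have hadj : T.Adj (par hT r x) x := by
    have h1 := (pth hT r x).adj_getVert_succ (i := (pth hT r x).length - 1) (by omega)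
    rw [show (pth hT r x).length - 1 + 1 = (pth hT r x).length by omega,
      Walk.getVert_length] at h1
    exact h1
  refine ⟨hadj, ?_⟩
  have hmem : par hT r x ∈ (pth hT r x).support := getVert_mem_support _ _
  have hsplit := dist_split hT (pth_isPath hT r x) hmem
  have h1 : T.dist (par hT r x) x = 1 := SimpleGraph.dist_eq_one_iff_adj.mpr hadj
  omega

lemma par_adj (hT : T.IsTree) {r x : V} (hx : x ≠ r) : T.Adj (par hT r x) x :=
  (par_spec hT hx).1

lemma par_dist (hT : T.IsTree) {r x : V} (hx : x ≠ r) :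
    T.dist r (par hT r x) + 1 = T.dist r x := (par_spec hT hx).2

/-- uniqueness of the parent -/
lemma par_eq (hT : T.IsTree) {r x w : V} (hx : x ≠ r) (h : T.Adj w x)
    (hd : T.dist r w + 1 = T.dist r x) : w = par hT r x := by
  have hlen : (pth hT r x).length = T.dist r x := length_eq_dist hT (pth_isPath hT r x)
  have hpos : 1 ≤ T.dist r x := dist_pos_of_ne hT (Ne.symm hx)
  have hw : w ∈ (pth hT r x).support := by
    by_contra hw
    obtain ⟨q, hq, hql⟩ := cons_path_end hT (pth_isPath hT r x) h.symm hw
    have := length_eq_dist hT hq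
    omega
  -- takeUntil w has length = dist r w = length - 1
  have h1 : ((pth hT r x).takeUntil w hw).length = T.dist r w :=
    length_eq_dist hT ((pth_isPath hT r x).takeUntil hw)
  have h3 := Walk.getVert_append ((pth hT r x).takeUntil w hw) ((pth hT r x).dropUntil w hw)
    ((pth hT r x).length - 1)
  rw [(pth hT r x).take_spec hw] at h3
  unfold par
  rw [h3, if_neg (by omega), h1]
  have : T.dist r x - 1 - T.dist r w = 0 := by omega
  rw [hlen, this, Walk.getVert_zero]

/-- neighbor classification: a neighbor of `x` is either the parent or a child -/
lemma nbr_class (hT : T.IsTree) {r x w : V} (hx : x ≠ r) (h : T.Adj w x) :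
    w = par hT r x ∨ T.dist r w = T.dist r x + 1 := by
  by_cases hw : w ∈ (pth hT r x).support
  · left
    have hsplit := dist_split hT (pth_isPath hT r x) hw
    have h1 : T.dist w x = 1 := SimpleGraph.dist_eq_one_iff_adj.mpr h
    exact par_eq hT hx h (by omega)
  · right
    obtain ⟨q, hq, hql⟩ := cons_path_end hT (pth_isPath hT r x) h.symm hw
    have h2 := length_eq_dist hT hq
    have hlen : (pth hT r x).length = T.dist r x := length_eq_dist hT (pth_isPath hT r x)
    omega

/-- Key lemma: if `z` is no farther from the root than `x`, the path from `x` to `z`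
starts by going to the parent of `x`. -/
lemma dist_through_par (hT : T.IsTree) {r x z : V} (hx : x ≠ r) (hz : z ≠ x)
    (hle : T.dist r z ≤ T.dist r x) : T.dist x z = 1 + T.dist (par hT r x) z := by
  suffices H : ∀ n (x z : V), x ≠ r → z ≠ x → T.dist r z ≤ T.dist r x → T.dist x z = n →
      T.dist x z = 1 + T.dist (par hT r x) z by
    exact H (T.dist x z) x z hx hz hle rfl
  clear hx hz hle x z
  intro n
  induction n using Nat.strong_induction_on with
  | _ n ih =>
  intro x z hx hz hle hn
  have hpos : 1 ≤ T.dist x z := dist_pos_of_ne hT (Ne.symm hz)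
  set s := pth hT x z with hs
  have hslen : s.length = T.dist x z := length_eq_dist hT (pth_isPath hT x z)
  set w := s.getVert 1 with hwdef
  have hadj : T.Adj x w := by
    have := s.adj_getVert_succ (i := 0) (by omega)
    simpa using this
  have hwmem : w ∈ s.support := getVert_mem_support _ _
  have hxw : T.dist x w = 1 := SimpleGraph.dist_eq_one_iff_adj.mpr hadj
  have hsplit : T.dist x w + T.dist w z = T.dist x z := dist_split hT (pth_isPath hT x z) hwmem
  by_cases hpar : w = par hT r x
  · rw [← hpar]; omega
  · exfalso
    rcases nbr_class hT hx hadj.symm with h | h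
    · exact hpar h
    · -- w is a child of x; z ≠ w else dist r z too big
      have hzw : z ≠ w := by
        intro hzw
        have := hle
        rw [hzw] at this
        omega
      have hwr : w ≠ r := by
        intro hwr
        rw [hwr] at h
        simp [SimpleGraph.dist_self] at h
      have hparw : x = par hT r w := par_eq hT hwr hadj (by omega)
      have := ih (T.dist w z) (by omega) w z hwr hzw (by omega) rfl
      rw [← hparw] at this
      omega


/-! ### pair sums along lists -/

variable (T) in
/-- sum of consecutive distances along a list -/
noncomputable def pairSum : List V → ℕ
  | [] => 0
  | [_] => 0
  | x :: y :: t => T.dist x y + pairSum (y :: t)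

@[simp] lemma pairSum_nil : pairSum T [] = 0 := rfl
@[simp] lemma pairSum_single (x : V) : pairSum T [x] = 0 := rfl
lemma pairSum_cons_cons (x y : V) (t : List V) :
    pairSum T (x :: y :: t) = T.dist x y + pairSum T (y :: t) := by
  simp [pairSum]

lemma pairSum_cut (A : List V) (x : V) (B : List V) :
    pairSum T (A ++ x :: B) = pairSum T (A ++ [x]) + pairSum T (x :: B) := by
  induction A with
  | nil => simp
  | cons a A ih =>
    cases A with
    | nil =>
      cases B with
      | nil => simp [pairSum_cons_cons]
      | cons b B => simp [pairSum_cons_cons]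
    | cons a' A' =>
      simp only [List.cons_append, pairSum_cons_cons] at *
      omega

/-- total: `lastD l d` is the last entry of `l`, or `d` if `l` is empty -/
def lastD : List V → V → V
  | [], d => d
  | x :: t, _ => lastD t x

@[simp] lemma lastD_nil (d : V) : lastD ([] : List V) d = d := rfl
@[simp] lemma lastD_cons (x : V) (t : List V) (d : V) : lastD (x :: t) d = lastD t x := rfl

lemma lastD_append (A B : List V) (d : V) : lastD (A ++ B) d = lastD B (lastD A d) := by
  induction A generalizing d with
  | nil => rfl
  | cons a A ih => simp [ih]

lemma lastD_ne_nil (x : V) (t : List V) (d d' : V) : lastD (x :: t) d = lastD (x :: t) d' := by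
  induction t generalizing x d d' with
  | nil => rfl
  | cons y t ih => simpa using ih y y y

/-- telescoping: the distance from the head to the last element is at most the pair sum -/
lemma dist_lastD_le_pairSum (hT : T.IsTree) (t : List V) (x : V) :
    T.dist x (lastD t x) ≤ pairSum T (x :: t) := by
  induction t generalizing x with
  | nil => simp [SimpleGraph.dist_self]
  | cons y t ih =>
    have h1 : T.dist x (lastD t y) ≤ T.dist x y + T.dist y (lastD t y) :=
      hT.isConnected.dist_triangle
    have := ih y
    simp only [lastD_cons, pairSum_cons_cons]
    omega

/-! ### the Euler-tour enumeration lemma -/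

lemma euler (hT : T.IsTree) (r : V) (S : Finset V) (hr : r ∈ S)
    (hcl : ∀ u ∈ S, u ≠ r → par hT r u ∈ S) :
    ∃ l : List V, l.Nodup ∧ (∀ u, u ∈ l ↔ u ∈ S) ∧ (∃ t, l = r :: t) ∧
      pairSum T l + T.dist (lastD l r) r + 2 ≤ 2 * S.card := by
  suffices H : ∀ n (S : Finset V), S.card = n → r ∈ S →
      (∀ u ∈ S, u ≠ r → par hT r u ∈ S) →
      ∃ l : List V, l.Nodup ∧ (∀ u, u ∈ l ↔ u ∈ S) ∧ (∃ t, l = r :: t) ∧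
        pairSum T l + T.dist (lastD l r) r + 2 ≤ 2 * S.card by
    exact H S.card S rfl hr hcl
  clear hr hcl S
  intro n
  induction n using Nat.strong_induction_on with
  | _ n ih =>
  intro S hcard hr hcl
  by_cases hsing : S.card ≤ 1
  · -- S = {r}
    have : S = {r} := by
      apply Finset.eq_singleton_iff_unique_mem.mpr
      refine ⟨hr, fun u hu => ?_⟩
      by_contra hne
      have := Finset.one_lt_card.mpr ⟨u, hu, r, hr, hne⟩
      omega
    refine ⟨[r], by simp, by simp [this], ⟨[], rfl⟩, ?_⟩
    simp [this, SimpleGraph.dist_self]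
  · push_neg at hsing
    -- pick x ∈ S farthest from r
    obtain ⟨x, hxS, hxmax⟩ := S.exists_max_image (fun u => T.dist r u) ⟨r, hr⟩
    have hxr : x ≠ r := by
      intro h
      obtain ⟨u, hu, hur⟩ := Finset.exists_mem_ne hsing r
      have h1 : 1 ≤ T.dist r u := dist_pos_of_ne hT (Ne.symm hur)
      have h2 := hxmax u hu
      rw [h] at h2
      have h0 : T.dist r r = 0 := SimpleGraph.dist_self
      omega
    set S' := S.erase x with hS'
    have hrS' : r ∈ S' := Finset.mem_erase.mpr ⟨Ne.symm hxr, hr⟩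
    have hcard' : S'.card = S.card - 1 := Finset.card_erase_of_mem hxS
    have hcl' : ∀ u ∈ S', u ≠ r → par hT r u ∈ S' := by
      intro u hu hur
      have huS : u ∈ S := Finset.mem_of_mem_erase hu
      have hp : par hT r u ∈ S := hcl u huS hur
      refine Finset.mem_erase.mpr ⟨?_, hp⟩
      intro hpx
      have h1 := par_dist hT hur
      have h2 := hxmax u huS
      have hux : u ≠ x := (Finset.mem_erase.mp hu).1
      rw [hpx] at h1
      omega
    obtain ⟨l', hnd', hmem', ⟨t', hht'⟩, hsum'⟩ :=
      ih (S.card - 1) (by omega) S' hcard' hrS' hcl'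
    -- insert x after its parent y
    set y := par hT r x with hy
    have hyS : y ∈ S := hcl x hxS hxr
    have hyx : y ≠ x := (par_adj hT hxr).ne
    have hyS' : y ∈ S' := Finset.mem_erase.mpr ⟨hyx, hyS⟩
    have hyl' : y ∈ l' := (hmem' y).mpr hyS'
    obtain ⟨A, B, hAB⟩ := List.append_of_mem hyl'
    have hxl' : x ∉ l' := fun h => (Finset.notMem_erase x S) ((hmem' x).mp h)
    subst hAB
    have hdyx : T.dist y x = 1 := SimpleGraph.dist_eq_one_iff_adj.mpr (par_adj hT hxr)
    have hperm : (A ++ y :: x :: B) ~ x :: (A ++ y :: B) := by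
      have h1 : A ++ y :: x :: B = (A ++ [y]) ++ x :: B := by simp
      have h2 : x :: (A ++ y :: B) = x :: ((A ++ [y]) ++ B) := by simp
      rw [h1, h2]
      exact List.perm_middle
    refine ⟨A ++ y :: x :: B, ?_, ?_, ?_, ?_⟩
    · rw [hperm.nodup_iff]
      exact List.nodup_cons.mpr ⟨hxl', hnd'⟩
    · intro u
      rw [hperm.mem_iff, List.mem_cons]
      constructor
      · rintro (rfl | hu)
        · exact hxS
        · exact Finset.mem_of_mem_erase ((hmem' u).mp hu)
      · intro hu
        by_cases hux : u = x
        · exact Or.inl hux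
        · exact Or.inr ((hmem' u).mpr (Finset.mem_erase.mpr ⟨hux, hu⟩))
    · -- head is r
      cases A with
      | nil =>
        injection hht' with h1 h2
        exact ⟨x :: B, by rw [h1]; rfl⟩
      | cons a A' =>
        rw [List.cons_append] at hht'
        injection hht' with h1 h2
        exact ⟨A' ++ y :: x :: B, by rw [h1]; rfl⟩
    · -- the sum estimate
      have e1 : pairSum T (A ++ y :: x :: B) =
          pairSum T (A ++ [y]) + T.dist y x + pairSum T (x :: B) := by
        rw [pairSum_cut A y (x :: B), pairSum_cons_cons]
        omega
      have e2 : pairSum T (A ++ y :: B) = pairSum T (A ++ [y]) + pairSum T (y :: B) :=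
        pairSum_cut A y B
      have hScard : S.card = S'.card + 1 := by omega
      cases B with
      | nil =>
        -- new last is x
        have elast : lastD (A ++ y :: x :: []) r = x := by
          rw [lastD_append]; rfl
        have elast' : lastD (A ++ y :: []) r = y := by
          rw [lastD_append]; rfl
        have hdist : T.dist x r = T.dist y r + 1 := by
          have h1 := par_dist hT hxr
          rw [← hy] at h1
          have c1 : T.dist x r = T.dist r x := SimpleGraph.dist_comm
          have c2 : T.dist y r = T.dist r y := SimpleGraph.dist_comm
          omega
        rw [e1, elast]
        rw [elast'] at hsum'
        simp only [pairSum_single] at e1 hsum' ⊢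
        omega
      | cons z B' =>
        -- last unchanged, pairSum increases by exactly 2
        have hzS' : z ∈ S' := (hmem' z).mp (by simp)
        have hzx : z ≠ x := (Finset.mem_erase.mp hzS').1
        have hzS : z ∈ S := Finset.mem_of_mem_erase hzS'
        have hPAR : T.dist x z = 1 + T.dist y z :=
          dist_through_par hT hxr hzx (hxmax z hzS)
        have e3 : pairSum T (x :: z :: B') = T.dist x z + pairSum T (z :: B') :=
          pairSum_cons_cons _ _ _
        have e4 : pairSum T (y :: z :: B') = T.dist y z + pairSum T (z :: B') :=
          pairSum_cons_cons _ _ _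
        have elast : lastD (A ++ y :: x :: z :: B') r = lastD (z :: B') x := by
          rw [lastD_append]; simp
        have elast' : lastD (A ++ y :: z :: B') r = lastD (z :: B') y := by
          rw [lastD_append]; simp
        have elasteq : lastD (z :: B') x = lastD (z :: B') y := lastD_ne_nil _ _ _ _
        rw [e1, e3, elast, elasteq]
        rw [e2, e4, elast'] at hsum'
        omega


/-! ### concatenation of blocks -/

/-- concatenation of blocks `lb i, lb (i+1), ..., lb (i+n)` -/
def blk (lb : ℕ → List V) : ℕ → ℕ → List V
  | i, 0 => lb i
  | i, n + 1 => lb i ++ blk lb (i + 1) n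

lemma blk_zero (lb : ℕ → List V) (i : ℕ) : blk lb i 0 = lb i := rfl
lemma blk_succ (lb : ℕ → List V) (i n : ℕ) : blk lb i (n + 1) = lb i ++ blk lb (i + 1) n := rfl

lemma mem_blk (lb : ℕ → List V) (i n : ℕ) (u : V) :
    u ∈ blk lb i n ↔ ∃ k ≤ n, u ∈ lb (i + k) := by
  induction n generalizing i with
  | zero =>
    simp only [blk_zero]
    constructor
    · intro h; exact ⟨0, le_rfl, by simpa using h⟩
    · rintro ⟨k, hk, h⟩; interval_cases k; simpa using h
  | succ n ih =>
    rw [blk_succ, List.mem_append, ih]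
    constructor
    · rintro (h | ⟨k, hk, h⟩)
      · exact ⟨0, by omega, by simpa using h⟩
      · exact ⟨k + 1, by omega, by rwa [show i + 1 + k = i + (k + 1) by omega] at h⟩
    · rintro ⟨k, hk, h⟩
      cases k with
      | zero => exact Or.inl (by simpa using h)
      | succ k => exact Or.inr ⟨k, by omega, by rwa [show i + (k + 1) = i + 1 + k by omega] at h⟩

lemma blk_nodup (lb : ℕ → List V) (Dm : ℕ)
    (hnd : ∀ k, (lb k).Nodup)
    (hdisj : ∀ k l u, k < l → l ≤ Dm → u ∈ lb k → u ∈ lb l → False) :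
    ∀ n i, i + n ≤ Dm → (blk lb i n).Nodup := by
  intro n
  induction n with
  | zero => intro i _; exact hnd i
  | succ n ih =>
    intro i hi
    rw [blk_succ, List.nodup_append]
    refine ⟨hnd i, ih (i + 1) (by omega), ?_⟩
    intro u hu1 u' hu2 huu
    subst huu
    rw [mem_blk] at hu2
    obtain ⟨k, hk, hu2⟩ := hu2
    exact hdisj i (i + 1 + k) u (by omega) (by omega) hu1 hu2

lemma blk_prefix (lb : ℕ → List V) :
    ∀ n i k, k ≤ n → ∃ Pre, blk lb i n = Pre ++ blk lb (i + k) (n - k) := by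
  intro n
  induction n with
  | zero => intro i k hk; interval_cases k; exact ⟨[], rfl⟩
  | succ n ih =>
    intro i k hk
    cases k with
    | zero => exact ⟨[], rfl⟩
    | succ k =>
      obtain ⟨Pre, hPre⟩ := ih (i + 1) k (by omega)
      refine ⟨lb i ++ Pre, ?_⟩
      have e1 : i + 1 + k = i + (k + 1) := by omega
      have e2 : n - k = n + 1 - (k + 1) := by omega
      rw [e1, e2] at hPre
      rw [blk_succ, hPre, List.append_assoc]

lemma blk_suffix (lb : ℕ → List V) :
    ∀ n i m, m ≤ n → ∃ Post, blk lb i n = blk lb i m ++ Post := by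
  intro n
  induction n with
  | zero => intro i m hm; interval_cases m; exact ⟨[], by simp [blk_zero]⟩
  | succ n ih =>
    intro i m hm
    cases m with
    | zero =>
      exact ⟨blk lb (i + 1) n, rfl⟩
    | succ m =>
      obtain ⟨Post, hPost⟩ := ih (i + 1) m (by omega)
      exact ⟨Post, by rw [blk_succ, blk_succ, hPost, List.append_assoc]⟩

lemma blk_last (lb : ℕ → List V) :
    ∀ n i, ∃ W, blk lb i n = W ++ lb (i + n) := by
  intro n
  induction n with
  | zero => intro i; exact ⟨[], by simp [blk_zero]⟩
  | succ n ih =>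
    intro i
    obtain ⟨W, hW⟩ := ih (i + 1)
    refine ⟨lb i ++ W, ?_⟩
    have e1 : i + 1 + n = i + (n + 1) := by omega
    rw [e1] at hW
    rw [blk_succ, hW, List.append_assoc]

lemma blk_cons (lb : ℕ → List V) (c : ℕ → V)
    (hhead : ∀ k, ∃ t, lb k = c k :: t) (n i : ℕ) :
    ∃ s, blk lb i n = c i :: s := by
  cases n with
  | zero => exact hhead i
  | succ n =>
    obtain ⟨t, ht⟩ := hhead i
    exact ⟨t ++ blk lb (i + 1) n, by rw [blk_succ, ht]; simp⟩

lemma pairSum_snoc (z : V) (t : List V) (x : V) :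
    pairSum T ((z :: t) ++ [x]) = pairSum T (z :: t) + T.dist (lastD t z) x := by
  induction t generalizing z with
  | nil => simp [pairSum_cons_cons]
  | cons y t' ih =>
    simp only [List.cons_append, pairSum_cons_cons] at *
    rw [ih y]
    simp
    omega

/-- the key quantitative bound on the pair sum of a concatenation of blocks -/
lemma blk_bound (hT : T.IsTree) (lb : ℕ → List V) (c : ℕ → V) (cnt : ℕ → ℕ)
    (hhead : ∀ k, ∃ t, lb k = c k :: t)
    (heul : ∀ k, pairSum T (lb k) + T.dist (lastD (lb k) (c k)) (c k) + 2 ≤ 2 * cnt k)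
    (hadjc : ∀ k, T.dist (c k) (c (k + 1)) ≤ 1) :
    ∀ n i, pairSum T (blk lb i n) + T.dist (lastD (blk lb i n) (c i)) (c (i + n)) + (n + 2) ≤
      2 * ∑ k ∈ Finset.range (n + 1), cnt (i + k) := by
  intro n
  induction n with
  | zero =>
    intro i
    simpa [blk_zero] using heul i
  | succ n ih =>
    intro i
    obtain ⟨t, ht⟩ := hhead i
    obtain ⟨s, hs⟩ := blk_cons lb c hhead n (i + 1)
    have hb : blk lb i (n + 1) = lb i ++ blk lb (i + 1) n := blk_succ lb i n
    -- pairSum of the append, via the cut lemma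
    have hcut : pairSum T (blk lb i (n + 1)) =
        pairSum T (lb i ++ [c (i + 1)]) + pairSum T (blk lb (i + 1) n) := by
      rw [hb, hs, pairSum_cut (lb i) (c (i + 1)) s]
    have hjun : pairSum T (lb i ++ [c (i + 1)]) =
        pairSum T (lb i) + T.dist (lastD (lb i) (c i)) (c (i + 1)) := by
      rw [ht, pairSum_snoc]
      rfl
    have htri : T.dist (lastD (lb i) (c i)) (c (i + 1)) ≤
        T.dist (lastD (lb i) (c i)) (c i) + 1 := by
      have h1 : T.dist (lastD (lb i) (c i)) (c (i + 1)) ≤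
          T.dist (lastD (lb i) (c i)) (c i) + T.dist (c i) (c (i + 1)) :=
        hT.isConnected.dist_triangle
      have := hadjc i
      omega
    have hlast : lastD (blk lb i (n + 1)) (c i) = lastD (blk lb (i + 1) n) (c (i + 1)) := by
      rw [hb, lastD_append, hs]
      exact lastD_ne_nil _ _ _ _
    have hsum : ∑ k ∈ Finset.range (n + 2), cnt (i + k) =
        cnt i + ∑ k ∈ Finset.range (n + 1), cnt (i + 1 + k) := by
      rw [Finset.sum_range_succ']
      have : ∀ k, cnt (i + (k + 1)) = cnt (i + 1 + k) := fun k => by congr 1; omega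
      simp only [this]
      have h0 : cnt (i + 0) = cnt i := rfl
      omega
    have hih := ih (i + 1)
    have heuli := heul i
    have hidx : i + 1 + n = i + (n + 1) := by omega
    rw [hidx] at hih
    rw [hcut, hjun, hlast, hsum]
    omega

lemma takeWhile_eq (X : List V) (p : V) (Y : List V) (h : ∀ x ∈ X, x ≠ p) :
    (X ++ p :: Y).takeWhile (fun x => decide (x ≠ p)) = X := by
  induction X with
  | nil => simp
  | cons a Xs ih =>
    have ha : a ≠ p := h a (List.mem_cons_self)
    simp only [List.cons_append, List.takeWhile_cons, decide_eq_true_eq]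
    rw [if_pos ha, ih (fun x hx => h x (List.mem_cons_of_mem a hx))]

lemma seg_le (A M E : List V) (p q : V) :
    pairSum T (p :: (M ++ [q])) ≤ pairSum T (A ++ p :: (M ++ q :: E)) := by
  have h2 : p :: (M ++ q :: E) = (p :: M) ++ q :: E := by simp
  have h4 : (p :: M) ++ [q] = p :: (M ++ [q]) := by simp
  calc pairSum T (p :: (M ++ [q]))
      ≤ pairSum T ((p :: M) ++ [q]) + pairSum T (q :: E) := by rw [h4]; omega
    _ = pairSum T ((p :: M) ++ q :: E) := (pairSum_cut _ _ _).symm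
    _ = pairSum T (p :: (M ++ q :: E)) := by rw [h2]
    _ ≤ pairSum T (A ++ p :: (M ++ q :: E)) := by rw [pairSum_cut A p _]; omega

lemma two_mem_split {l : List V} {p q : V} (hp : p ∈ l) (hq : q ∈ l) (hne : p ≠ q) :
    (∃ A B C, l = A ++ p :: (B ++ q :: C)) ∨ (∃ A B C, l = A ++ q :: (B ++ p :: C)) := by
  induction l with
  | nil => cases hp
  | cons x t ih =>
    by_cases hxp : x = p
    · subst hxp
      have hqt : q ∈ t := by
        rcases List.mem_cons.mp hq with h | h
        · exact absurd h.symm hne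
        · exact h
      obtain ⟨B, C, hBC⟩ := List.append_of_mem hqt
      exact Or.inl ⟨[], B, C, by rw [hBC]; rfl⟩
    · by_cases hxq : x = q
      · subst hxq
        have hpt : p ∈ t := by
          rcases List.mem_cons.mp hp with h | h
          · exact absurd h.symm hxp
          · exact h
        obtain ⟨B, C, hBC⟩ := List.append_of_mem hpt
        exact Or.inr ⟨[], B, C, by rw [hBC]; rfl⟩
      · have hpt : p ∈ t := by
          rcases List.mem_cons.mp hp with h | h
          · exact absurd h.symm hxp
          · exact h
        have hqt : q ∈ t := by
          rcases List.mem_cons.mp hq with h | h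
          · exact absurd h.symm hxq
          · exact h
        rcases ih hpt hqt with ⟨A, B, C, hh⟩ | ⟨A, B, C, hh⟩
        · exact Or.inl ⟨x :: A, B, C, by rw [hh]; rfl⟩
        · exact Or.inr ⟨x :: A, B, C, by rw [hh]; rfl⟩


set_option maxHeartbeats 1000000 in
theorem main :
    ∃ C : ℝ, 0 < C ∧
      ∀ (V : Type) [Fintype V], ∀ (T : SimpleGraph V), T.IsTree →
        ∀ (R : ℕ), 1 ≤ R →
        ∀ (Δ : ℝ),
          (∀ (v : V) (r : ℕ), 1 ≤ r →
            ({u : V | T.dist v u ≤ r}.ncard : ℝ) - 1 ≤ 2 * r * Δ) →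
          ¬ ContainsTripod T R →
          ∃ f : V → ℝ, ∀ p q : V,
            (T.dist p q : ℝ) ≤ |f p - f q| ∧
            |f p - f q| ≤ C * Δ * R * T.dist p q := by
  classical
  refine ⟨16, by norm_num, ?_⟩
  intro V _ T hT R hR Δ hden htri
  by_cases hV : ∀ p q : V, p = q
  · refine ⟨fun _ => 0, fun p q => ?_⟩
    have : p = q := hV p q
    subst this
    simp [SimpleGraph.dist_self]
  · push_neg at hV
    obtain ⟨p0, q0, hp0q0⟩ := hV
    -- diameter pair
    obtain ⟨ab, -, habmax⟩ := (Finset.univ ×ˢ Finset.univ : Finset (V × V)).exists_max_image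
      (fun pq => T.dist pq.1 pq.2) ⟨(p0, q0), by simp⟩
    set a := ab.1
    set b := ab.2
    set D := T.dist a b with hD
    have hmax : ∀ x y : V, T.dist x y ≤ D := fun x y => habmax (x, y) (by simp)
    set P := pth hT a b with hP
    have hPp : P.IsPath := pth_isPath hT a b
    have hPlen : P.length = D := length_eq_dist hT hPp
    set v : ℕ → V := fun k => P.getVert k with hv
    have hva : ∀ k, k ≤ D → T.dist a (v k) = k ∧ T.dist (v k) b = D - k := by
      intro k hk
      have h1 : T.dist a (v k) ≤ k := dist_getVert_le hT P k
      have hmem : v k ∈ P.support := getVert_mem_support P k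
      have hsplit : T.dist a (v k) + T.dist (v k) b = D := dist_split hT hPp hmem
      have h2 : T.dist (v k) b ≤ D - k := by
        have e1 : P.reverse.getVert (D - k) = v k := by
          rw [Walk.getVert_reverse, hPlen]
          congr 1
          omega
        have := dist_getVert_le hT P.reverse (D - k)
        rw [e1] at this
        have hc : T.dist (v k) b = T.dist b (v k) := SimpleGraph.dist_comm
        omega
      omega
    have hadj1 : ∀ t, T.dist (v t) (v (t + 1)) ≤ 1 := by
      intro t
      by_cases ht : t < D
      · have := P.adj_getVert_succ (i := t) (by omega)
        exact le_of_eq (SimpleGraph.dist_eq_one_iff_adj.mpr this)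
      · have e1 : v t = b := P.getVert_of_length_le (by omega)
        have e2 : v (t + 1) = b := P.getVert_of_length_le (by omega)
        rw [e1, e2]
        simp [SimpleGraph.dist_self]
    have hvchain : ∀ i k, T.dist (v i) (v (i + k)) ≤ k := by
      intro i k
      induction k with
      | zero => simp [SimpleGraph.dist_self]
      | succ k ih =>
        have h1 : T.dist (v i) (v (i + k + 1)) ≤
            T.dist (v i) (v (i + k)) + T.dist (v (i + k)) (v (i + k + 1)) :=
          hT.isConnected.dist_triangle
        have h2 := hadj1 (i + k)
        have : i + (k + 1) = i + k + 1 := by omega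
        rw [this]
        omega
    -- the cluster-center existence package
    have hW : ∀ u : V, ∃ m : ℕ, m ≤ D ∧
        T.dist a u = m + T.dist (v m) u ∧
        T.dist b u = (D - m) + T.dist (v m) u ∧
        v m ∈ (pth hT a u).support ∧
        (∀ z, z ∈ P.support → z ∈ (pth hT a u).support → T.dist a z ≤ m) := by
      intro u
      set q := pth hT a u with hq
      have hqp : q.IsPath := pth_isPath hT a u
      -- pick the common support vertex farthest from a
      obtain ⟨w, hwmem, hwmax⟩ := (Finset.univ.filter
          (fun z => z ∈ P.support ∧ z ∈ q.support) : Finset V).exists_max_image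
        (fun z => T.dist a z) ⟨a, by simp [Finset.mem_filter]⟩
      rw [Finset.mem_filter] at hwmem
      obtain ⟨-, hwP, hwq⟩ := hwmem
      have hwv : v (T.dist a w) = w := getVert_dist_mem hT hPp hwP
      set m := T.dist a w with hm
      have hmD : m ≤ D := by
        have := dist_split hT hPp hwP
        omega
      have hsplit1 : T.dist a w + T.dist w u = T.dist a u := dist_split hT hqp hwq
      -- glued path from b through w to u
      have hbu : T.dist b u = (D - m) + T.dist w u := by
        have hdisj : ∀ z, z ∈ (P.dropUntil w hwP).reverse.support →
            z ∈ (q.dropUntil w hwq).support → z = w := by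
          intro z hz1 hz2
          rw [Walk.support_reverse, List.mem_reverse] at hz1
          have hzP : z ∈ P.support := Walk.support_dropUntil_subset _ _ hz1
          have hzq : z ∈ q.support := Walk.support_dropUntil_subset _ _ hz2
          have h1 : T.dist a z ≤ m := hwmax z (by simp [Finset.mem_filter, hzP, hzq])
          have h2 : T.dist w z + T.dist z u = T.dist w u :=
            dist_split hT (hqp.dropUntil hwq) hz2
          have h3 : T.dist a z + T.dist z u = T.dist a u := dist_split hT hqp hzq
          have h4 : T.dist w z = 0 := by omega
          exact (dist_eq_zero hT h4).symm
        have hglue : ((P.dropUntil w hwP).reverse.append (q.dropUntil w hwq)).IsPath :=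
          append_isPath hT (hPp.dropUntil hwP).reverse (hqp.dropUntil hwq) hdisj
        have hlen := length_eq_dist hT hglue
        rw [Walk.length_append, Walk.length_reverse] at hlen
        have e1 : (P.dropUntil w hwP).length = T.dist w b :=
          length_eq_dist hT (hPp.dropUntil hwP)
        have e2 : (q.dropUntil w hwq).length = T.dist w u :=
          length_eq_dist hT (hqp.dropUntil hwq)
        have e3 : T.dist a w + T.dist w b = D := dist_split hT hPp hwP
        rw [e1, e2] at hlen
        omega
      refine ⟨m, hmD, ?_, ?_, ?_, ?_⟩
      · rw [hwv]; omega
      · rw [hwv]; omega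
      · rw [hwv]; exact hwq
      · intro z hzP hzq
        rw [hm]
        exact hwmax z (by simp [Finset.mem_filter, hzP, hzq])
    -- the cluster index function
    choose mcl hmclD hmcl1 hmcl2 hmcl3 hmcl4 using hW
    have hUNIQ : ∀ u (m : ℕ), m ≤ D → T.dist a u = m + T.dist (v m) u →
        T.dist b u = (D - m) + T.dist (v m) u → m = mcl u := by
      intro u m hm h1 h2
      have u1 := hmclD u
      have u2 := hmcl1 u
      have u3 := hmcl2 u
      omega
    have hmclv : ∀ k, k ≤ D → mcl (v k) = k := by
      intro k hk
      have h0 : T.dist (v k) (v k) = 0 := SimpleGraph.dist_self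
      have h1 : T.dist a (v k) = k + T.dist (v k) (v k) := by
        have := (hva k hk).1
        omega
      have h2 : T.dist b (v k) = (D - k) + T.dist (v k) (v k) := by
        rw [h0]
        have := (hva k hk).2
        have hc : T.dist b (v k) = T.dist (v k) b := SimpleGraph.dist_comm
        omega
      exact (hUNIQ (v k) k hk h1 h2).symm
    -- no `R`-tripod: every vertex is at distance `< R` from the diameter path
    have hR0 : ∀ u : V, T.dist (v (mcl u)) u + 1 ≤ R := by
      intro u
      by_contra hcon
      push_neg at hcon
      set m := mcl u with hm
      set h := T.dist (v m) u with hh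
      have hhR : R ≤ h := by omega
      have hh1 : 1 ≤ h := by omega
      have hmD : m ≤ D := hmclD u
      have hau : T.dist a u = m + h := hmcl1 u
      have hbu : T.dist b u = (D - m) + h := hmcl2 u
      have hauD : T.dist a u ≤ D := hmax a u
      have hbuD : T.dist b u ≤ D := hmax b u
      have hhm : h ≤ m := by omega
      have hmhD : m + h ≤ D := by omega
      -- distances along the diameter path
      have hvam : T.dist a (v m) = m := (hva m hmD).1
      have hva1 : T.dist a (v (m - h)) = m - h := (hva (m - h) (by omega)).1
      have hva2 : T.dist a (v (m + h)) = m + h := (hva (m + h) (by omega)).1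
      have hvb2 : T.dist (v (m + h)) b = D - (m + h) := (hva (m + h) (by omega)).2
      have dvmh : T.dist (v m) (v (m + h)) = h := by
        have h1 : T.dist (v m) (v (m + h)) ≤ h := hvchain m h
        have h2 : T.dist a (v (m + h)) ≤ T.dist a (v m) + T.dist (v m) (v (m + h)) :=
          hT.isConnected.dist_triangle
        omega
      -- the three legs of the tripod
      have hvm : v m ∈ P.support := getVert_mem_support P m
      set t := P.takeUntil (v m) hvm with htdef
      have htp : t.IsPath := hPp.takeUntil hvm
      have htlen : t.length = m := by rw [length_eq_dist hT htp]; exact hvam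
      set dr := P.dropUntil (v m) hvm with hdrdef
      have hdrp : dr.IsPath := hPp.dropUntil hvm
      have hx1t : v (m - h) ∈ t.support := by
        have e0 := Walk.getVert_append t dr (m - h)
        rw [P.take_spec hvm] at e0
        rw [if_pos (by omega : m - h < t.length)] at e0
        have : v (m - h) = t.getVert (m - h) := e0
        rw [this]
        exact getVert_mem_support t (m - h)
      have hx2dr : v (m + h) ∈ dr.support := by
        have e0 := Walk.getVert_append t dr (m + h)
        rw [P.take_spec hvm] at e0
        rw [if_neg (by omega : ¬ m + h < t.length)] at e0
        have : v (m + h) = dr.getVert (m + h - t.length) := e0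
        rw [this]
        exact getVert_mem_support dr _
      set q := pth hT a u with hqdef
      have hqp : q.IsPath := pth_isPath hT a u
      have hvmq : v m ∈ q.support := hmcl3 u
      set p₁ := (t.dropUntil (v (m - h)) hx1t).reverse with hp1def
      set p₂ := dr.takeUntil (v (m + h)) hx2dr with hp2def
      set p₃ := q.dropUntil (v m) hvmq with hp3def
      have hp1 : p₁.IsPath := (htp.dropUntil hx1t).reverse
      have hp2 : p₂.IsPath := hdrp.takeUntil hx2dr
      have hp3 : p₃.IsPath := hqp.dropUntil hvmq
      -- support facts for p₁
      have hF1 : ∀ z ∈ p₁.support, T.dist a z ≤ m := by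
        intro z hz
        rw [hp1def, Walk.support_reverse, List.mem_reverse] at hz
        have hzt : z ∈ t.support := Walk.support_dropUntil_subset _ _ hz
        have := dist_split hT htp hzt
        rw [length_eq_dist hT htp] at htlen
        omega
      -- support facts for p₂
      have hF2 : ∀ z ∈ p₂.support, m ≤ T.dist a z ∧ T.dist a z ≤ m + h ∧
          T.dist a z + T.dist z b = D := by
        intro z hz
        have hzdr : z ∈ dr.support := Walk.support_takeUntil_subset _ _ hz
        have hzP : z ∈ P.support := Walk.support_dropUntil_subset _ _ hzdr
        have s1 : T.dist a z + T.dist z b = D := dist_split hT hPp hzP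
        have s2 : T.dist (v m) z + T.dist z b = T.dist (v m) b := dist_split hT hdrp hzdr
        have s3 : T.dist (v m) z + T.dist z (v (m + h)) = T.dist (v m) (v (m + h)) :=
          dist_split hT hp2 hz
        have hvmb : T.dist (v m) b = D - m := (hva m hmD).2
        refine ⟨by omega, by omega, s1⟩
      -- support facts for p₃
      have hF3 : ∀ z ∈ p₃.support, T.dist a z = m + T.dist (v m) z ∧
          T.dist (v m) z + T.dist z u = h := by
        intro z hz
        have hzq : z ∈ q.support := Walk.support_dropUntil_subset _ _ hz
        have s1 : T.dist a z + T.dist z u = T.dist a u := dist_split hT hqp hzq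
        have s2 : T.dist (v m) z + T.dist z u = T.dist (v m) u := dist_split hT hp3 hz
        exact ⟨by omega, by omega⟩
      -- the glued path from b to u, giving dist b z for z on p₃
      have hdisj : ∀ z, z ∈ dr.reverse.support → z ∈ p₃.support → z = v m := by
        intro z hz1 hz2
        rw [Walk.support_reverse, List.mem_reverse] at hz1
        have hzP : z ∈ P.support := Walk.support_dropUntil_subset _ _ hz1
        have hzq : z ∈ q.support := Walk.support_dropUntil_subset _ _ hz2
        have h1 : T.dist a z ≤ m := hmcl4 u z hzP hzq
        have h2 := (hF3 z hz2).1
        have h3 : T.dist (v m) z = 0 := by omega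
        exact (dist_eq_zero hT h3).symm
      have hglue : (dr.reverse.append p₃).IsPath :=
        append_isPath hT hdrp.reverse hp3 hdisj
      have hF4 : ∀ z ∈ p₃.support, T.dist b z = (D - m) + T.dist (v m) z := by
        intro z hz
        have hzglue : z ∈ (dr.reverse.append p₃).support := by
          rw [Walk.mem_support_append_iff]
          exact Or.inr hz
        have s1 : T.dist b z + T.dist z u = T.dist b u := dist_split hT hglue hzglue
        have s2 := (hF3 z hz).2
        omega
      -- build the tripod
      refine htri ⟨v m, v (m - h), v (m + h), u, p₁, p₂, p₃, hp1, hp2, hp3,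
        ?_, ?_, ?_, ?_, ?_, ?_⟩
      · -- z ∈ p₂ : R ≤ dist (v (m-h)) z
        intro z hz
        obtain ⟨g1, g2, g3⟩ := hF2 z hz
        have tr : T.dist a z ≤ T.dist a (v (m - h)) + T.dist (v (m - h)) z :=
          hT.isConnected.dist_triangle
        omega
      · -- z ∈ p₃ : R ≤ dist (v (m-h)) z
        intro z hz
        obtain ⟨g1, g2⟩ := hF3 z hz
        have tr : T.dist a z ≤ T.dist a (v (m - h)) + T.dist (v (m - h)) z :=
          hT.isConnected.dist_triangle
        omega
      · -- z ∈ p₁ : R ≤ dist (v (m+h)) z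
        intro z hz
        have g1 := hF1 z hz
        have tr : T.dist a (v (m + h)) ≤ T.dist a z + T.dist z (v (m + h)) :=
          hT.isConnected.dist_triangle
        have hc : T.dist (v (m + h)) z = T.dist z (v (m + h)) := SimpleGraph.dist_comm
        omega
      · -- z ∈ p₃ : R ≤ dist (v (m+h)) z
        intro z hz
        have g1 := hF4 z hz
        have tr : T.dist b z ≤ T.dist b (v (m + h)) + T.dist (v (m + h)) z :=
          hT.isConnected.dist_triangle
        have hc : T.dist b (v (m + h)) = T.dist (v (m + h)) b := SimpleGraph.dist_comm
        omega
      · -- z ∈ p₁ : R ≤ dist u z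
        intro z hz
        have g1 := hF1 z hz
        have tr : T.dist a u ≤ T.dist a z + T.dist z u := hT.isConnected.dist_triangle
        have hc : T.dist u z = T.dist z u := SimpleGraph.dist_comm
        omega
      · -- z ∈ p₂ : R ≤ dist u z
        intro z hz
        obtain ⟨g1, g2, g3⟩ := hF2 z hz
        have tr : T.dist b u ≤ T.dist b z + T.dist z u := hT.isConnected.dist_triangle
        have hc : T.dist u z = T.dist z u := SimpleGraph.dist_comm
        have hc2 : T.dist b z = T.dist z b := SimpleGraph.dist_comm
        omega
    -- clusters are closed under taking parents towards the cluster center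
    have hclose : ∀ u : V, u ≠ v (mcl u) → mcl (par hT (v (mcl u)) u) = mcl u := by
      intro u hu
      set m := mcl u with hmdef
      set c := v m with hcdef
      set q := pth hT a u with hqdef
      have hqp : q.IsPath := pth_isPath hT a u
      have hcu : c ∈ q.support := hmcl3 u
      set s := q.dropUntil c hcu with hsdef
      have hsp : s.IsPath := hqp.dropUntil hcu
      have hs_eq : s = pth hT c u := eq_pth hT hsp
      set y := par hT c u with hydef
      have hydist : T.dist c y + 1 = T.dist c u := par_dist hT hu
      have hyadj : T.Adj y u := par_adj hT hu
      have hyu1 : T.dist y u = 1 := SimpleGraph.dist_eq_one_iff_adj.mpr hyadj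
      have hymem : y ∈ s.support := by
        rw [hs_eq]
        exact getVert_mem_support _ _
      have hyq : y ∈ q.support := Walk.support_dropUntil_subset _ _ hymem
      have hsplity : T.dist a y + T.dist y u = T.dist a u := dist_split hT hqp hyq
      have hau : T.dist a u = m + T.dist c u := hmcl1 u
      have hbu : T.dist b u = (D - m) + T.dist c u := hmcl2 u
      have hmD : m ≤ D := hmclD u
      have hcb : T.dist c b = D - m := (hva m hmD).2
      have hub : 1 ≤ T.dist c u := dist_pos_of_ne hT (Ne.symm hu)
      -- the two defining equations for y
      have h1 : T.dist a y = m + T.dist c y := by omega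
      have h2 : T.dist b y = (D - m) + T.dist c y := by
        have up : T.dist b y ≤ T.dist b c + T.dist c y := hT.isConnected.dist_triangle
        have low : T.dist b u ≤ T.dist b y + T.dist y u := hT.isConnected.dist_triangle
        have hc1 : T.dist b c = T.dist c b := SimpleGraph.dist_comm
        omega
      -- the support and maximality conditions transfer to y
      have hq_y : pth hT a y = q.takeUntil y hyq := (eq_pth hT (hqp.takeUntil hyq)).symm
      have h3 : v m ∈ (pth hT a y).support := by
        rw [hq_y]
        have hcy : T.dist a c ≤ T.dist a y := by
          have : T.dist a c = m := (hva m hmD).1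
          omega
        exact mem_takeUntil_of_dist_le hT hqp hcu hyq hcy
      exact (hUNIQ y m hmD h1 h2).symm
    -- `Δ ≥ 1/2`
    have hD1 : 1 ≤ D := le_trans (dist_pos_of_ne hT hp0q0) (hmax p0 q0)
    have hΔhalf : (1 : ℝ) ≤ 2 * Δ := by
      have hav1 : T.dist a (v 1) = 1 := by
        have := (hva 1 hD1).1
        omega
      have hane : a ≠ v 1 := by
        intro h
        rw [← h] at hav1
        have : T.dist a a = 0 := SimpleGraph.dist_self
        omega
      have hsub : ({a, v 1} : Set V) ⊆ {u : V | T.dist a u ≤ 1} := by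
        intro u hu
        rcases hu with h | h
        · subst h; simp [SimpleGraph.dist_self]
        · simp only [Set.mem_singleton_iff] at h; subst h; simp [hav1]
      have h2 : 2 ≤ ({u : V | T.dist a u ≤ 1}).ncard := by
        have e1 : ({a, v 1} : Set V).ncard = 2 := Set.ncard_pair hane
        rw [← e1]
        exact Set.ncard_le_ncard hsub (Set.toFinite _)
      have := hden a 1 le_rfl
      have hc : (2 : ℝ) ≤ (({u : V | T.dist a u ≤ 1}).ncard : ℝ) := by exact_mod_cast h2
      push_cast at this
      linarith
    -- the clusters as finsets
    set Cf : ℕ → Finset V := fun k => Finset.univ.filter (fun u => mcl u = k) with hCf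
    have hCmem : ∀ k u, u ∈ Cf k ↔ mcl u = k := by
      intro k u
      simp [hCf]
    -- the per-cluster Euler lists
    have hLB : ∀ k : ℕ, ∃ l : List V, l.Nodup ∧ (∃ t, l = v k :: t) ∧
        (∀ u, u ∈ l ↔ (mcl u = k ∧ k ≤ D) ∨ (u = v k ∧ D < k)) ∧
        pairSum T l + T.dist (lastD l (v k)) (v k) + 2 ≤
          2 * (if k ≤ D then (Cf k).card else 1) := by
      intro k
      by_cases hk : k ≤ D
      · have hvk : v k ∈ Cf k := (hCmem k (v k)).mpr (hmclv k hk)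
        have hclk : ∀ u ∈ Cf k, u ≠ v k → par hT (v k) u ∈ Cf k := by
          intro u hu hune
          have hmu : mcl u = k := (hCmem k u).mp hu
          have h1 := hclose u (by rw [hmu]; exact hune)
          rw [hmu] at h1
          exact (hCmem k _).mpr h1
        obtain ⟨l, hnd, hmem, ⟨t, hht⟩, hsum⟩ := euler hT (v k) (Cf k) hvk hclk
        refine ⟨l, hnd, ⟨t, hht⟩, ?_, ?_⟩
        · intro u
          rw [hmem u, hCmem k u]
          constructor
          · intro h; exact Or.inl ⟨h, hk⟩
          · rintro (⟨h, -⟩ | ⟨-, hDk⟩)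
            · exact h
            · omega
        · rw [if_pos hk]
          rw [hht] at hsum ⊢
          exact hsum
      · refine ⟨[v k], by simp, ⟨[], rfl⟩, ?_, ?_⟩
        · intro u
          simp only [List.mem_singleton]
          constructor
          · intro h; exact Or.inr ⟨h, by omega⟩
          · rintro (⟨h, hkD⟩ | ⟨h, -⟩)
            · omega
            · exact h
        · rw [if_neg hk]
          have : T.dist (v k) (v k) = 0 := SimpleGraph.dist_self
          simp [this]
    choose lb hlbnd hlbhead hlbmem hlbsum using hLB
    -- the global list
    set L := blk lb 0 D with hLdef
    have hLnd : L.Nodup := by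
      refine blk_nodup lb D hlbnd ?_ D 0 (by omega)
      intro k l u hkl hlD hk hl
      rcases (hlbmem k u).mp hk with ⟨h1, h2⟩ | ⟨-, h2⟩
      · rcases (hlbmem l u).mp hl with ⟨h3, h4⟩ | ⟨-, h4⟩
        · omega
        · omega
      · omega
    have hLmem : ∀ u : V, u ∈ L := by
      intro u
      refine (mem_blk lb 0 D u).mpr ⟨mcl u, hmclD u, ?_⟩
      rw [Nat.zero_add]
      exact (hlbmem (mcl u) u).mpr (Or.inl ⟨rfl, hmclD u⟩)
    -- the embedding
    set f : V → ℝ :=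
      fun u => (pairSum T (L.takeWhile (fun x => decide (x ≠ u)) ++ [u]) : ℝ) with hfdef
    have hfval : ∀ (X : List V) (p : V) (Y : List V), L = X ++ p :: Y →
        f p = (pairSum T (X ++ [p]) : ℝ) := by
      intro X p Y hXY
      have hnd := hLnd
      rw [hXY] at hnd
      have hdisj := List.disjoint_of_nodup_append hnd
      have hX : ∀ x ∈ X, x ≠ p := by
        intro x hx he
        exact hdisj hx (he ▸ List.mem_cons_self)
      rw [hfdef]
      simp only
      rw [hXY, takeWhile_eq X p Y hX]
    -- the core estimate
    have hEST : ∀ (p q : V) (X Y Z : List V) (i n : ℕ), i + n ≤ D →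
        L = X ++ p :: (Y ++ q :: Z) →
        pairSum T (p :: (Y ++ [q])) ≤ pairSum T (blk lb i n) →
        (n : ℝ) ≤ T.dist p q + 2 * R → p ≠ q →
        (T.dist p q : ℝ) ≤ f q - f p ∧ f q - f p ≤ 16 * Δ * R * T.dist p q := by
      intro p q X Y Z i n hin hdec hps hn hpq
      have hfp : f p = (pairSum T (X ++ [p]) : ℝ) := hfval X p (Y ++ q :: Z) hdec
      have hdec2 : L = (X ++ p :: Y) ++ q :: Z := by rw [hdec]; simp
      have hfq : f q = (pairSum T ((X ++ p :: Y) ++ [q]) : ℝ) := hfval _ q Z hdec2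
      have hkey : pairSum T ((X ++ p :: Y) ++ [q]) =
          pairSum T (X ++ [p]) + pairSum T (p :: (Y ++ [q])) := by
        have e1 : (X ++ p :: Y) ++ [q] = X ++ p :: (Y ++ [q]) := by simp
        rw [e1, pairSum_cut X p (Y ++ [q])]
      have hfd : f q - f p = (pairSum T (p :: (Y ++ [q])) : ℝ) := by
        rw [hfq, hfp, hkey]
        push_cast
        ring
      have hlow : T.dist p q ≤ pairSum T (p :: (Y ++ [q])) := by
        have h1 := dist_lastD_le_pairSum hT (Y ++ [q]) p
        have h2 : lastD (Y ++ [q]) p = q := by rw [lastD_append]; rfl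
        rw [h2] at h1
        exact h1
      -- counting: the union of clusters i..i+n is inside a ball of radius n+R
      have hblk := blk_bound hT lb v (fun k => if k ≤ D then (Cf k).card else 1)
        hlbhead hlbsum hadj1 n i
      set N := ({u : V | T.dist (v i) u ≤ n + R}).ncard with hNdef
      have hcount : ∑ k ∈ Finset.range (n + 1),
          (if i + k ≤ D then (Cf (i + k)).card else 1) ≤ N := by
        have hsum_eq : ∀ k ∈ Finset.range (n + 1),
            (if i + k ≤ D then (Cf (i + k)).card else 1) = (Cf (i + k)).card := by
          intro k hk
          rw [Finset.mem_range] at hk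
          rw [if_pos (by omega)]
        rw [Finset.sum_congr rfl hsum_eq]
        have hdisjC : ∀ x ∈ Finset.range (n + 1), ∀ y ∈ Finset.range (n + 1), x ≠ y →
            Disjoint (Cf (i + x)) (Cf (i + y)) := by
          intro x hx y hy hxy
          rw [Finset.disjoint_left]
          intro u hux huy
          have h1 := (hCmem (i + x) u).mp hux
          have h2 := (hCmem (i + y) u).mp huy
          omega
        rw [← Finset.card_biUnion hdisjC]
        have hsubB : (Finset.range (n + 1)).biUnion (fun k => Cf (i + k)) ⊆
            ({u : V | T.dist (v i) u ≤ n + R}).toFinset := by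
          intro u hu
          rw [Finset.mem_biUnion] at hu
          obtain ⟨k, hk, hu⟩ := hu
          rw [Finset.mem_range] at hk
          have hmu : mcl u = i + k := (hCmem (i + k) u).mp hu
          have hc1 : T.dist (v i) u ≤ T.dist (v i) (v (i + k)) + T.dist (v (i + k)) u :=
            hT.isConnected.dist_triangle
          have hc2 := hvchain i k
          have hc3 := hR0 u
          rw [hmu] at hc3
          rw [Set.mem_toFinset]
          simp only [Set.mem_setOf_eq]
          omega
        calc ((Finset.range (n + 1)).biUnion (fun k => Cf (i + k))).card
            ≤ ({u : V | T.dist (v i) u ≤ n + R}).toFinset.card := Finset.card_le_card hsubB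
          _ = N := (Set.ncard_eq_toFinset_card' _).symm
      have hden' := hden (v i) (n + R) (by omega)
      rw [← hNdef] at hden'
      -- assemble
      refine ⟨?_, ?_⟩
      · rw [hfd]
        exact_mod_cast hlow
      · rw [hfd]
        have hnat : pairSum T (p :: (Y ++ [q])) + n + 2 ≤ 2 * N := by
          have h0 : 0 ≤ T.dist (lastD (blk lb i n) (v i)) (v (i + n)) := Nat.zero_le _
          omega
        have hreal : (pairSum T (p :: (Y ++ [q])) : ℝ) ≤ 2 * (N : ℝ) - n - 2 := by
          have hcast : (pairSum T (p :: (Y ++ [q])) : ℝ) + n + 2 ≤ 2 * (N : ℝ) := by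
            exact_mod_cast hnat
          linarith
        have hd1 : (1 : ℝ) ≤ T.dist p q := by
          exact_mod_cast dist_pos_of_ne hT hpq
        have hR1 : (1 : ℝ) ≤ (R : ℝ) := by exact_mod_cast hR
        have hΔ0 : (0 : ℝ) ≤ Δ := by linarith
        push_cast at hden'
        -- pairSum seg ≤ 2N - n - 2 ≤ 4(n+R)Δ - n ≤ 4nΔ + 4RΔ
        have hbound : (pairSum T (p :: (Y ++ [q])) : ℝ) ≤ 4 * (n + R) * Δ - n := by
          nlinarith [hreal, hden']
        set d : ℝ := (T.dist p q : ℝ) with hd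
        have h4 : 4 * ((n : ℝ) + R) * Δ - n ≤ 16 * Δ * R * d := by
          have hn0 : (0 : ℝ) ≤ n := by positivity
          have hdd0 : (0:ℝ) ≤ d - 1 := by linarith
          have hRr0 : (0:ℝ) ≤ (R:ℝ) - 1 := by linarith
          nlinarith [mul_nonneg hΔ0 hdd0, mul_nonneg hΔ0 hRr0,
            mul_nonneg (mul_nonneg hΔ0 hRr0) hdd0,
            mul_nonneg (mul_nonneg hΔ0 (by linarith : (0:ℝ) ≤ (R:ℝ))) hdd0,
            mul_nonneg hΔ0 (by linarith : (0:ℝ) ≤ d + 2 * R - n)]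
        linarith
    -- upper estimate for ordered pairs
    have hGOOD : ∀ p q : V, p ≠ q → mcl p ≤ mcl q →
        ((T.dist p q : ℝ) ≤ f q - f p ∧ f q - f p ≤ 16 * Δ * R * T.dist p q) ∨
        ((T.dist q p : ℝ) ≤ f p - f q ∧ f p - f q ≤ 16 * Δ * R * T.dist q p) := by
      intro p q hpq hij
      set i := mcl p with hi
      set j := mcl q with hj
      have hiD : i ≤ D := hmclD p
      have hjD : j ≤ D := hmclD q
      have hplb : p ∈ lb i := (hlbmem i p).mpr (Or.inl ⟨rfl, hiD⟩)
      have hqlb : q ∈ lb j := (hlbmem j q).mpr (Or.inl ⟨rfl, hjD⟩)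
      by_cases hij' : i = j
      · -- same cluster
        rw [← hij'] at hqlb
        obtain ⟨Pre, hPre⟩ := blk_prefix lb D 0 i hiD
        obtain ⟨Post, hPost⟩ := blk_suffix lb (D - i) i 0 (by omega)
        rcases two_mem_split hplb hqlb hpq with ⟨A, B, C, hABC⟩ | ⟨A, B, C, hABC⟩
        · left
          refine hEST p q (Pre ++ A) B (C ++ Post) i 0 (by omega) ?_ ?_ ?_ hpq
          · rw [hLdef, hPre, Nat.zero_add, hPost, blk_zero, hABC]
            simp [List.append_assoc]
          · rw [blk_zero, hABC]
            exact seg_le A B C p q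
          · have : (0:ℝ) ≤ (T.dist p q : ℝ) := by positivity
            have hRr : (0:ℝ) ≤ (R : ℝ) := by positivity
            push_cast
            linarith
        · right
          refine hEST q p (Pre ++ A) B (C ++ Post) i 0 (by omega) ?_ ?_ ?_ (Ne.symm hpq)
          · rw [hLdef, hPre, Nat.zero_add, hPost, blk_zero, hABC]
            simp [List.append_assoc]
          · rw [blk_zero, hABC]
            exact seg_le A B C q p
          · have : (0:ℝ) ≤ (T.dist q p : ℝ) := by positivity
            have hRr : (0:ℝ) ≤ (R : ℝ) := by positivity
            push_cast
            linarith
      · -- different clusters, i < j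
        left
        have hlt : i < j := lt_of_le_of_ne hij hij'
        set n := j - i with hn
        have hn1 : 1 ≤ n := by omega
        obtain ⟨Pre, hPre⟩ := blk_prefix lb D 0 i hiD
        obtain ⟨Post, hPost⟩ := blk_suffix lb (D - i) i n (by omega)
        have hblksucc : blk lb i n = lb i ++ blk lb (i + 1) (n - 1) := by
          have : n = (n - 1) + 1 := by omega
          rw [this]
          exact blk_succ lb i (n - 1)
        obtain ⟨W, hW2⟩ := blk_last lb (n - 1) (i + 1)
        have hWj : blk lb (i + 1) (n - 1) = W ++ lb j := by
          rw [hW2]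
          congr 2
          omega
        obtain ⟨Ap, Ep, hpdec⟩ := List.append_of_mem hplb
        obtain ⟨Aq, Eq2, hqdec⟩ := List.append_of_mem hqlb
        have hblkeq : blk lb i n = Ap ++ p :: ((Ep ++ W ++ Aq) ++ q :: Eq2) := by
          rw [hblksucc, hWj, hpdec, hqdec]
          simp [List.append_assoc]
        refine hEST p q (Pre ++ Ap) (Ep ++ W ++ Aq) (Eq2 ++ Post) i n (by omega) ?_ ?_ ?_ hpq
        · rw [hLdef, hPre, Nat.zero_add, hPost, hblkeq]
          simp [List.append_assoc]
        · rw [hblkeq]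
          exact seg_le Ap (Ep ++ W ++ Aq) Eq2 p q
        · -- n ≤ d + 2R
          have hvij : j - i ≤ T.dist (v i) (v j) := by
            have h1 : T.dist a (v j) ≤ T.dist a (v i) + T.dist (v i) (v j) :=
              hT.isConnected.dist_triangle
            have h2 := (hva i hiD).1
            have h3 := (hva j hjD).1
            omega
          have htr : T.dist (v i) (v j) ≤
              T.dist (v i) p + T.dist p q + T.dist q (v j) := by
            have h1 : T.dist (v i) (v j) ≤ T.dist (v i) p + T.dist p (v j) :=
              hT.isConnected.dist_triangle
            have h2 : T.dist p (v j) ≤ T.dist p q + T.dist q (v j) :=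
              hT.isConnected.dist_triangle
            omega
          have hip : T.dist (v i) p + 1 ≤ R := by
            have := hR0 p
            rw [← hi] at this
            exact this
          have hjq : T.dist q (v j) + 1 ≤ R := by
            have := hR0 q
            rw [← hj] at this
            have hc : T.dist q (v j) = T.dist (v j) q := SimpleGraph.dist_comm
            omega
          have hnat2 : n ≤ T.dist p q + 2 * R := by omega
          exact_mod_cast hnat2
    -- finish
    clear_value f
    refine ⟨f, fun p q => ?_⟩
    by_cases hpq : p = q
    · subst hpq
      simp [SimpleGraph.dist_self]
    · have hsym : T.dist p q = T.dist q p := SimpleGraph.dist_comm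
      have hgood : ((T.dist p q : ℝ) ≤ f q - f p ∧ f q - f p ≤ 16 * Δ * R * T.dist p q) ∨
          ((T.dist q p : ℝ) ≤ f p - f q ∧ f p - f q ≤ 16 * Δ * R * T.dist q p) := by
        rcases le_or_gt (mcl p) (mcl q) with h | h
        · exact hGOOD p q hpq h
        · rcases hGOOD q p (Ne.symm hpq) (le_of_lt h) with h' | h'
          · exact Or.inr h'
          · exact Or.inl h'
      have hd1 : (1 : ℝ) ≤ (T.dist p q : ℝ) := by
        exact_mod_cast dist_pos_of_ne hT hpq
      have hdpos : (0 : ℝ) ≤ (T.dist p q : ℝ) := by linarith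
      rcases hgood with ⟨h1, h2⟩ | ⟨h1, h2⟩
      · have habs : |f p - f q| = f q - f p := by
          rw [abs_sub_comm]
          exact abs_of_nonneg (by linarith)
        rw [habs]
        exact ⟨h1, h2⟩
      · have hsymr : (T.dist q p : ℝ) = (T.dist p q : ℝ) := by exact_mod_cast hsym.symm
        rw [hsymr] at h1 h2
        have habs : |f p - f q| = f p - f q := abs_of_nonneg (by linarith)
        rw [habs]
        exact ⟨h1, h2⟩

end TreeEmbed

/-- There is an absolute constant `C > 0` such that every tree
`T` with local density at most `Δ` containing no `R`-tripod (`R ≥ 1`) admits an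
embedding `f : V(T) → ℝ` with
`d_T(p,q) ≤ |f p − f q| ≤ C·Δ·R·d_T(p,q)` for all `p, q`. -/
theorem tree_no_tripod_embeds_into_line :
    ∃ C : ℝ, 0 < C ∧
      ∀ (V : Type) [Fintype V], ∀ (T : SimpleGraph V), T.IsTree →
        ∀ (R : ℕ), 1 ≤ R →
        ∀ (Δ : ℝ),
          (∀ (v : V) (r : ℕ), 1 ≤ r →
            ({u : V | T.dist v u ≤ r}.ncard : ℝ) - 1 ≤ 2 * r * Δ) →
          ¬ ContainsTripod T R →
          ∃ f : V → ℝ, ∀ p q : V,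
            (T.dist p q : ℝ) ≤ |f p - f q| ∧
            |f p - f q| ≤ C * Δ * R * T.dist p q := by
  exact TreeEmbed.main
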